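/- Let V be a ℚ-vector space with a linear SL₂(ℚ)-action of finite unipotent length (i.e., (u-1)ⁿ = 0 for u = u₁ = !![1,1;0,1]), and let x_λ = log u_λ for λ ∈ ℚ. Then x_λ = λ·x₁ in End(V) for every λ ∈ ℚ. -/

import Mathlib

open Matrix

def unipQ (lam : ℚ) : Matrix.SpecialLinearGroup (Fin 2) ℚ :=
  ⟨!![1, lam; 0, 1], by simp [Matrix.det_fin_two_of]⟩

open Polynomial Finset


noncomputable def Lp (n : ℕ) : Polynomial ℚ :=
  ∑ k ∈ Finset.Icc (1:ℕ) (n-1), Polynomial.C ((-1:ℚ)^(k+1) * (k:ℚ)⁻¹) * Polynomial.X ^ k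

lemma geom_id (m : ℕ) :
    (1 + X) * ∑ j ∈ range m, (-X : Polynomial ℚ)^j = 1 - (-X)^m := by
  linear_combination -(geom_sum_mul (-X : Polynomial ℚ) m)

lemma X_dvd_Lp (n : ℕ) : X ∣ Lp n := by
  refine Finset.dvd_sum fun k hk => ?_
  have hk1 : k ≠ 0 := by have := (Finset.mem_Icc.mp hk).1; omega
  exact Dvd.dvd.mul_left (dvd_pow_self X hk1) _

lemma Lp_deriv (n : ℕ) :
    (1 + X) * derivative (Lp n) = 1 - (-X : Polynomial ℚ)^(n-1) := by
  have h1 : derivative (Lp n) = ∑ j ∈ range (n-1), (-X : Polynomial ℚ)^j := by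
    rw [Lp, derivative_sum]
    rw [← Finset.Ico_add_one_right_eq_Icc, Finset.sum_Ico_eq_sum_range]
    simp only [Nat.add_sub_cancel]
    refine Finset.sum_congr rfl fun i hi => ?_
    rw [derivative_C_mul_X_pow]
    have hne : ((1+i : ℕ) : ℚ) ≠ 0 := by positivity
    rw [mul_assoc, inv_mul_cancel₀ hne, mul_one]
    have : ((-1:ℚ))^(1+i+1) = (-1)^i := by
      rw [show 1+i+1 = i+2 by omega, pow_add]; ring
    rw [this, show 1+i-1 = i by omega, neg_pow (X : Polynomial ℚ) i]
    simp [← C_pow]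
  rw [h1, geom_id]

lemma div_of_deriv {n : ℕ} {F : Polynomial ℚ} (h0 : F.coeff 0 = 0)
    (hd : X^(n-1) ∣ derivative F) : X^n ∣ F := by
  rw [X_pow_dvd_iff]
  intro d hdn
  match d with
  | 0 => exact h0
  | (j+1) =>
    have hj : (derivative F).coeff j = 0 := by
      rw [X_pow_dvd_iff] at hd
      exact hd j (by omega)
    rw [coeff_derivative] at hj
    have hne : ((j:ℚ) + 1) ≠ 0 := by positivity
    rcases mul_eq_zero.mp hj with h | h
    · exact h
    · exact absurd h (by push_cast at h ⊢; exact hne)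

lemma lemM (n : ℕ) (p q : Polynomial ℚ) (hp : p.coeff 0 = 0) (hq : q.coeff 0 = 0) :
    X^n ∣ (Lp n).comp (p+q+p*q) - (Lp n).comp p - (Lp n).comp q := by
  set r : Polynomial ℚ := p + q + p*q with hr
  have hXp : X ∣ p := X_dvd_iff.mpr hp
  have hXq : X ∣ q := X_dvd_iff.mpr hq
  have hXr : X ∣ r := by rw [hr]; exact dvd_add (dvd_add hXp hXq) (hXp.mul_right q)
  have hL0 : eval 0 (Lp n) = 0 := by
    obtain ⟨s, hs⟩ := X_dvd_Lp n
    rw [hs]; simp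
  -- the three composed derivative identities
  have key : ∀ t : Polynomial ℚ,
      (1 + t) * (derivative (Lp n)).comp t = 1 - (-t)^(n-1) := by
    intro t
    have := congrArg (fun f => f.comp t) (Lp_deriv n)
    simpa [add_comp, mul_comp, one_comp, sub_comp, neg_comp, pow_comp] using this
  have hA := key p
  have hB := key q
  have hC := key r
  have hr' : derivative r = derivative p * (1+q) + derivative q * (1+p) := by
    rw [hr]; simp [derivative_mul]; ring
  -- derivative of F
  have hdF : derivative ((Lp n).comp r - (Lp n).comp p - (Lp n).comp q)
      = derivative r * (derivative (Lp n)).comp r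
        - derivative p * (derivative (Lp n)).comp p
        - derivative q * (derivative (Lp n)).comp q := by
    simp [derivative_comp]
  have hident : (1 + r) * derivative ((Lp n).comp r - (Lp n).comp p - (Lp n).comp q)
      = (1+q) * derivative p * ((-p)^(n-1) - (-r)^(n-1))
        + (1+p) * derivative q * ((-q)^(n-1) - (-r)^(n-1)) := by
    rw [hdF, hr']
    linear_combination (derivative p * (1+q) + derivative q * (1+p)) * hC
      - (1+q) * derivative p * hA - (1+p) * derivative q * hB
      - (derivative p * ((derivative (Lp n)).comp p)
         + derivative q * ((derivative (Lp n)).comp q)) * hr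
  -- X^(n-1) divides the RHS of hident
  have hdvd1 : X^(n-1) ∣ (1 + r) * derivative ((Lp n).comp r - (Lp n).comp p - (Lp n).comp q) := by
    rw [hident]
    have h1 : (X:Polynomial ℚ)^(n-1) ∣ (-p)^(n-1) - (-r)^(n-1) :=
      dvd_sub (pow_dvd_pow_of_dvd (hXp.neg_right) _) (pow_dvd_pow_of_dvd (hXr.neg_right) _)
    have h2 : (X:Polynomial ℚ)^(n-1) ∣ (-q)^(n-1) - (-r)^(n-1) :=
      dvd_sub (pow_dvd_pow_of_dvd (hXq.neg_right) _) (pow_dvd_pow_of_dvd (hXr.neg_right) _)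
    exact dvd_add (h1.mul_left _) (h2.mul_left _)
  have hco : IsCoprime ((X:Polynomial ℚ)^(n-1)) (1 + r) := by
    obtain ⟨s, hs⟩ := hXr
    refine IsCoprime.pow_left ⟨-s, 1, ?_⟩
    rw [hs]; ring
  have hdvd2 : X^(n-1) ∣ derivative ((Lp n).comp r - (Lp n).comp p - (Lp n).comp q) :=
    hco.dvd_of_dvd_mul_left hdvd1
  refine div_of_deriv ?_ hdvd2
  have h0 : ∀ t : Polynomial ℚ, t.coeff 0 = 0 → ((Lp n).comp t).coeff 0 = 0 := by
    intro t ht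
    rw [coeff_zero_eq_eval_zero] at ht ⊢
    rw [eval_comp, ht, hL0]
  have hr0 : r.coeff 0 = 0 := by
    rw [hr]; simp [mul_coeff_zero, hp, hq]
  simp [coeff_sub, h0 r hr0, h0 p hp, h0 q hq]

lemma unipQ_mul (a b : ℚ) : unipQ a * unipQ b = unipQ (a+b) := by
  apply Subtype.ext
  show (!![1, a; 0, 1] : Matrix (Fin 2) (Fin 2) ℚ) * !![1, b; 0, 1] = !![1, a+b; 0, 1]
  rw [Matrix.mul_fin_two]; norm_num [add_comm b a]

lemma unipQ_zero : unipQ 0 = 1 := by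
  apply Subtype.ext
  show (!![1, 0; 0, 1] : Matrix (Fin 2) (Fin 2) ℚ) = 1
  exact Matrix.one_fin_two.symm

lemma unipQ_pow (a : ℚ) (m : ℕ) : unipQ a ^ m = unipQ (m * a) := by
  induction m with
  | zero => simp [unipQ_zero]
  | succ m ih =>
      rw [pow_succ, ih, unipQ_mul]
      congr 1
      push_cast; ring

def diagQ (a : ℚ) (ha : a ≠ 0) : Matrix.SpecialLinearGroup (Fin 2) ℚ :=
  ⟨!![a, 0; 0, a⁻¹], by simp [Matrix.det_fin_two_of, mul_inv_cancel₀ ha]⟩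

lemma diagQ_mul_unipQ (a : ℚ) (ha : a ≠ 0) (l : ℚ) :
    diagQ a ha * unipQ l = unipQ (a^2 * l) * diagQ a ha := by
  apply Subtype.ext
  show (!![a, 0; 0, a⁻¹] : Matrix (Fin 2) (Fin 2) ℚ) * !![1, l; 0, 1]
      = !![1, a^2*l; 0, 1] * !![a, 0; 0, a⁻¹]
  ext i j
  fin_cases i <;> fin_cases j <;>
    simp [Matrix.mul_apply, Fin.sum_univ_two] <;> field_simp <;> ring

lemma diagQ_mul_inv (a : ℚ) (ha : a ≠ 0) :
    diagQ a ha * diagQ a⁻¹ (inv_ne_zero ha) = 1 := by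
  apply Subtype.ext
  show (!![a, 0; 0, a⁻¹] : Matrix (Fin 2) (Fin 2) ℚ) * !![a⁻¹, 0; 0, a⁻¹⁻¹] = 1
  rw [Matrix.mul_fin_two]
  rw [mul_inv_cancel₀ ha, inv_inv, inv_mul_cancel₀ ha]
  norm_num
  exact Matrix.one_fin_two.symm

lemma conj_pow' {A : Type*} [Ring A] (E E' M : A) (h1 : E * E' = 1) (h2 : E' * E = 1) (k : ℕ) :
    (E * M * E')^k = E * M^k * E' := by
  induction k with
  | zero => rw [pow_zero, pow_zero, mul_one, h1]
  | succ k ih =>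
      have hstep : E' * (E * M * E') = M * E' := by
        rw [← mul_assoc, ← mul_assoc, h2, one_mul]
      calc (E * M * E')^(k+1) = (E * M^k * E') * (E * M * E') := by rw [pow_succ, ih]
        _ = E * M^k * (E' * (E * M * E')) := by rw [mul_assoc]
        _ = E * M^k * (M * E') := by rw [hstep]
        _ = E * (M^k * M) * E' := by rw [← mul_assoc, ← mul_assoc]
        _ = E * M^(k+1) * E' := by rw [pow_succ]

lemma aeval_pow_eq_zero {A : Type*} [Ring A] [Algebra ℚ A] {N : A} {n : ℕ} (hn : N^n = 0)
    {p : Polynomial ℚ} (hp : p.coeff 0 = 0) : ((Polynomial.aeval N) p)^n = 0 := by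
  obtain ⟨s, hs⟩ := Polynomial.X_dvd_iff.mpr hp
  have hc : Commute N ((Polynomial.aeval N) s) := by
    show N * _ = _ * N
    calc N * (Polynomial.aeval N) s = (Polynomial.aeval N) (X * s) := by rw [_root_.map_mul, aeval_X]
      _ = (Polynomial.aeval N) (s * X) := by rw [mul_comm]
      _ = (Polynomial.aeval N) s * N := by rw [_root_.map_mul, aeval_X]
  rw [hs, _root_.map_mul, aeval_X, hc.mul_pow, hn, zero_mul]

noncomputable def gq (n : ℕ) : Polynomial ℚ := ∑ j ∈ Finset.range n, (-X : Polynomial ℚ)^j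

lemma gq_id (n : ℕ) : (1 + X) * gq n = 1 - (-X : Polynomial ℚ)^n := by
  unfold gq; exact geom_id n

lemma gq_sub_one_coeff (n : ℕ) (hn : 1 ≤ n) : (gq n - 1).coeff 0 = 0 := by
  obtain ⟨m, rfl⟩ : ∃ m, n = m + 1 := ⟨n - 1, by omega⟩
  rw [coeff_zero_eq_eval_zero]
  unfold gq
  rw [Finset.sum_range_succ']
  simp [Polynomial.eval_finset_sum, pow_succ]

section Rep
variable {V : Type*} [AddCommGroup V] [Module ℚ V]
variable (ρ : Representation ℚ (Matrix.SpecialLinearGroup (Fin 2) ℚ) V)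

noncomputable def NN (l : ℚ) : Module.End ℚ V := ρ (unipQ l) - 1

lemma rho_unip (l : ℚ) : ρ (unipQ l) = 1 + NN ρ l := by simp [NN]

lemma NN_nat_mul (m : ℕ) (μ : ℚ) :
    NN ρ ((m:ℚ) * μ) = (Polynomial.aeval (NN ρ μ)) (((1:Polynomial ℚ)+X)^m - 1) := by
  have h1 : ρ (unipQ ((m:ℚ)*μ)) = (ρ (unipQ μ))^m := by
    rw [← unipQ_pow, _root_.map_pow]
  rw [NN, h1, rho_unip, _root_.map_sub, _root_.map_pow, _root_.map_add, _root_.map_one, aeval_X]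

lemma rho_neg_unip (μ : ℚ) {n : ℕ} (hn : (NN ρ μ)^n = 0) :
    ρ (unipQ (-μ)) = (Polynomial.aeval (NN ρ μ)) (gq n) := by
  set S := (Polynomial.aeval (NN ρ μ)) (gq n) with hS
  have h1 : ρ (unipQ μ) * S = 1 := by
    have h := congrArg (Polynomial.aeval (NN ρ μ)) (gq_id n)
    rw [_root_.map_mul, _root_.map_sub, _root_.map_add, _root_.map_one, aeval_X,
      _root_.map_pow, _root_.map_neg, aeval_X] at h
    rw [rho_unip, hS, h, neg_pow, hn, mul_zero, sub_zero]
  have h2 : ρ (unipQ (-μ)) * ρ (unipQ μ) = 1 := by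
    rw [← _root_.map_mul, unipQ_mul, neg_add_cancel, unipQ_zero, _root_.map_one]
  calc ρ (unipQ (-μ)) = ρ (unipQ (-μ)) * (ρ (unipQ μ) * S) := by rw [h1, mul_one]
    _ = (ρ (unipQ (-μ)) * ρ (unipQ μ)) * S := by rw [mul_assoc]
    _ = S := by rw [h2, one_mul]

lemma NN_neg (μ : ℚ) {n : ℕ} (hn : (NN ρ μ)^n = 0) :
    NN ρ (-μ) = (Polynomial.aeval (NN ρ μ)) (gq n - 1) := by
  rw [NN, rho_neg_unip ρ μ hn, _root_.map_sub, _root_.map_one]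

lemma NN_conj (a : ℚ) (ha : a ≠ 0) (μ : ℚ) {n : ℕ} (hn : (NN ρ μ)^n = 0) :
    (NN ρ (a^2*μ))^n = 0 := by
  set E := ρ (diagQ a ha) with hE
  set E' := ρ (diagQ a⁻¹ (inv_ne_zero ha)) with hE'
  have hEE' : E * E' = 1 := by
    rw [hE, hE', ← _root_.map_mul, diagQ_mul_inv, _root_.map_one]
  have hE'E : E' * E = 1 := by
    have e : diagQ a⁻¹⁻¹ (inv_ne_zero (inv_ne_zero ha)) = diagQ a ha := by
      apply Subtype.ext
      show (!![a⁻¹⁻¹, 0; 0, a⁻¹⁻¹⁻¹] : Matrix (Fin 2) (Fin 2) ℚ) = !![a, 0; 0, a⁻¹]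
      rw [inv_inv]
    have h := diagQ_mul_inv a⁻¹ (inv_ne_zero ha)
    rw [e] at h
    rw [hE, hE', ← _root_.map_mul, h, _root_.map_one]
  have hconj : NN ρ (a^2*μ) = E * NN ρ μ * E' := by
    have h := congrArg ρ (diagQ_mul_unipQ a ha μ)
    rw [_root_.map_mul, _root_.map_mul] at h
    have h2 : ρ (unipQ (a^2*μ)) = E * ρ (unipQ μ) * E' := by
      calc ρ (unipQ (a^2*μ)) = ρ (unipQ (a^2*μ)) * (E * E') := by rw [hEE', mul_one]
        _ = (ρ (unipQ (a^2*μ)) * E) * E' := by rw [mul_assoc]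
        _ = (E * ρ (unipQ μ)) * E' := by rw [← h]
    rw [NN, h2, rho_unip, mul_add, mul_one, add_mul, hEE', add_sub_cancel_left]
  rw [hconj, conj_pow' E E' _ hEE' hE'E, hn, mul_zero, zero_mul]

lemma NN_nat_mul_nilp (μ : ℚ) (m : ℕ) {n : ℕ} (hn : (NN ρ μ)^n = 0) :
    (NN ρ ((m:ℚ)*μ))^n = 0 := by
  rw [NN_nat_mul]
  exact aeval_pow_eq_zero hn (by rw [coeff_zero_eq_eval_zero]; simp)

lemma NN_neg_nilp (μ : ℚ) {n : ℕ} (hn1 : 1 ≤ n) (hn : (NN ρ μ)^n = 0) :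
    (NN ρ (-μ))^n = 0 := by
  rw [NN_neg ρ μ hn]
  exact aeval_pow_eq_zero hn (gq_sub_one_coeff n hn1)

lemma NN_all_nilp {n : ℕ} (hn1 : 1 ≤ n) (hlen : (NN ρ 1)^n = 0) (μ : ℚ) :
    (NN ρ μ)^n = 0 := by
  have hnat : ∀ m : ℕ, (NN ρ (m:ℚ))^n = 0 := fun m => by
    simpa using NN_nat_mul_nilp ρ 1 m hlen
  have hint : ∀ m : ℤ, (NN ρ (m:ℚ))^n = 0 := by
    intro m
    obtain ⟨k, rfl | rfl⟩ := m.eq_nat_or_neg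
    · push_cast; exact hnat k
    · push_cast; exact NN_neg_nilp ρ _ hn1 (hnat k)
  have hden : ((μ.den:ℚ)) ≠ 0 := by
    exact_mod_cast μ.den_nz
  have h1 : (NN ρ (((μ.den:ℚ))⁻¹^2 * (μ.num:ℚ)))^n = 0 :=
    NN_conj ρ _ (inv_ne_zero hden) _ (hint μ.num)
  have h2 := NN_nat_mul_nilp ρ _ μ.den h1
  have h3 : (μ.den:ℚ) * (((μ.den:ℚ))⁻¹^2 * (μ.num:ℚ)) = μ := by
    have h4 : (μ.den:ℚ) * ((μ.den:ℚ))⁻¹^2 * (μ.num:ℚ) = (μ.num:ℚ) / μ.den := by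
      field_simp
    rw [← mul_assoc, h4, Rat.num_div_den]
  rwa [h3] at h2

lemma y_step (μ : ℚ) {n : ℕ} (hn : (NN ρ μ)^n = 0) (m : ℕ) :
    (Polynomial.aeval (NN ρ (((m+1:ℕ):ℚ)*μ))) (Lp n)
      = (Polynomial.aeval (NN ρ ((m:ℚ)*μ))) (Lp n) + (Polynomial.aeval (NN ρ μ)) (Lp n) := by
  set P : Polynomial ℚ := ((1:Polynomial ℚ)+X)^m - 1 with hP
  have hp : P.coeff 0 = 0 := by rw [coeff_zero_eq_eval_zero]; simp [hP]
  have hq : (X : Polynomial ℚ).coeff 0 = 0 := by simp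
  have hdvd := lemM n P X hp hq
  have hr : P + X + P*X = ((1:Polynomial ℚ)+X)^(m+1) - 1 := by
    rw [hP, pow_succ]; ring
  rw [hr] at hdvd
  obtain ⟨s, hs⟩ := hdvd
  have h := congrArg (Polynomial.aeval (NN ρ μ)) hs
  rw [_root_.map_sub, _root_.map_sub, _root_.map_mul, _root_.map_pow, aeval_X, hn, zero_mul,
    aeval_comp, aeval_comp, aeval_comp, aeval_X] at h
  rw [← NN_nat_mul ρ (m+1) μ, ← NN_nat_mul ρ m μ] at h
  rw [sub_sub, sub_eq_zero] at h
  push_cast at h ⊢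
  exact h

lemma NN_zero : NN ρ 0 = 0 := by
  rw [NN, unipQ_zero, _root_.map_one, sub_self]

lemma y_nat (μ : ℚ) {n : ℕ} (hn : (NN ρ μ)^n = 0) (m : ℕ) :
    (Polynomial.aeval (NN ρ ((m:ℚ)*μ))) (Lp n) = (m:ℚ) • (Polynomial.aeval (NN ρ μ)) (Lp n) := by
  induction m with
  | zero =>
      obtain ⟨s, hs⟩ := X_dvd_Lp n
      push_cast
      rw [zero_mul, NN_zero, hs, _root_.map_mul, aeval_X, zero_mul, zero_smul]
  | succ m ih =>
      have h := y_step ρ μ hn m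
      push_cast at h ⊢
      rw [h, ih, add_smul, one_smul]

lemma y_neg (μ : ℚ) {n : ℕ} (hn1 : 1 ≤ n) (hn : (NN ρ μ)^n = 0) :
    (Polynomial.aeval (NN ρ (-μ))) (Lp n) = - (Polynomial.aeval (NN ρ μ)) (Lp n) := by
  set P : Polynomial ℚ := gq n - 1 with hP
  have hp : P.coeff 0 = 0 := gq_sub_one_coeff n hn1
  have hq : (X : Polynomial ℚ).coeff 0 = 0 := by simp
  have hdvd := lemM n P X hp hq
  have hr : P + X + P*X = -(-X : Polynomial ℚ)^n := by
    rw [hP]; linear_combination gq_id n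
  rw [hr] at hdvd
  have hLr : (X : Polynomial ℚ)^n ∣ (Lp n).comp (-(-X : Polynomial ℚ)^n) := by
    obtain ⟨s, hs⟩ := X_dvd_Lp n
    rw [hs, mul_comp, X_comp]
    have : (X : Polynomial ℚ)^n ∣ -(-X : Polynomial ℚ)^n := by
      rw [neg_pow]
      exact (dvd_mul_left _ _).neg_right
    exact this.mul_right _
  have hdvd2 : (X : Polynomial ℚ)^n ∣ (Lp n).comp P + (Lp n).comp X := by
    have := dvd_sub hLr hdvd
    have he : (Lp n).comp (-(-X : Polynomial ℚ)^n)
        - ((Lp n).comp (-(-X : Polynomial ℚ)^n) - (Lp n).comp P - (Lp n).comp X)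
        = (Lp n).comp P + (Lp n).comp X := by ring
    rwa [he] at this
  obtain ⟨s, hs⟩ := hdvd2
  have h := congrArg (Polynomial.aeval (NN ρ μ)) hs
  rw [_root_.map_add, _root_.map_mul, _root_.map_pow, aeval_X, hn, zero_mul,
    aeval_comp, aeval_comp, aeval_X] at h
  rw [← NN_neg ρ μ hn] at h
  exact eq_neg_of_add_eq_zero_left h

end Rep


/-- If `V` is a `ℚ[SL₂(ℚ)]`-module of finite unipotent length `n`, then with
`x_λ = log u_λ` one has `x_λ = λ · x₁` in `End(V)` for every `λ ∈ ℚ`. -/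
theorem log_unip_is_scalar
    (V : Type*) [AddCommGroup V] [Module ℚ V]
    (ρ : Representation ℚ (Matrix.SpecialLinearGroup (Fin 2) ℚ) V)
    (n : ℕ) (hlen : (ρ (unipQ 1) - 1) ^ n = 0)
    (x : ℚ → Module.End ℚ V)
    (hx : ∀ lam : ℚ, x lam = ∑ k ∈ Finset.Icc (1 : ℕ) (n - 1),
      ((-1 : ℚ) ^ (k + 1) * (k : ℚ)⁻¹) • (ρ (unipQ lam) - 1) ^ k) :
    ∀ lam : ℚ, x lam = lam • x 1 := by
  intro lam
  rcases Nat.eq_zero_or_pos n with h0 | hn1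
  · subst h0
    have h1 : (0 : Module.End ℚ V) = 1 := by simpa using hlen.symm
    haveI := subsingleton_of_zero_eq_one h1
    exact Subsingleton.elim _ _
  · have hxa : ∀ l : ℚ, x l = (Polynomial.aeval (NN ρ l)) (Lp n) := by
      intro l
      rw [hx l, Lp, map_sum]
      refine Finset.sum_congr rfl fun k _ => ?_
      rw [_root_.map_mul, aeval_C, _root_.map_pow, aeval_X, Algebra.smul_def]
      rfl
    have hnil : ∀ μ : ℚ, (NN ρ μ)^n = 0 := NN_all_nilp ρ hn1 hlen
    have hint : ∀ m : ℤ, (Polynomial.aeval (NN ρ (m:ℚ))) (Lp n)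
        = (m:ℚ) • (Polynomial.aeval (NN ρ 1)) (Lp n) := by
      intro m
      obtain ⟨k, rfl | rfl⟩ := m.eq_nat_or_neg
      · have h1 := y_nat ρ 1 (hnil 1) k
        rw [mul_one] at h1
        push_cast
        exact h1
      · have h1 := y_nat ρ 1 (hnil 1) k
        rw [mul_one] at h1
        have h2 := y_neg ρ (k:ℚ) hn1 (hnil _)
        push_cast
        rw [h2, h1, neg_smul]
    have hden : ((lam.den:ℚ)) ≠ 0 := by
      exact_mod_cast lam.den_nz
    have hmain := y_nat ρ lam (hnil lam) lam.den
    have hdl : (lam.den:ℚ) * lam = (lam.num:ℚ) := by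
      rw [mul_comm]
      exact_mod_cast Rat.mul_den_eq_num lam
    have hkey : (lam.den:ℚ) • (Polynomial.aeval (NN ρ lam)) (Lp n)
        = (lam.num:ℚ) • (Polynomial.aeval (NN ρ 1)) (Lp n) := by
      rw [← hmain, hdl]
      exact hint lam.num
    rw [hxa lam, hxa 1]
    calc (Polynomial.aeval (NN ρ lam)) (Lp n)
        = ((lam.den:ℚ)⁻¹ * lam.den) • (Polynomial.aeval (NN ρ lam)) (Lp n) := by
          rw [inv_mul_cancel₀ hden, one_smul]
      _ = (lam.den:ℚ)⁻¹ • ((lam.den:ℚ) • (Polynomial.aeval (NN ρ lam)) (Lp n)) := by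
          rw [mul_smul]
      _ = (lam.den:ℚ)⁻¹ • ((lam.num:ℚ) • (Polynomial.aeval (NN ρ 1)) (Lp n)) := by
          rw [hkey]
      _ = ((lam.den:ℚ)⁻¹ * lam.num) • (Polynomial.aeval (NN ρ 1)) (Lp n) := by
          rw [mul_smul]
      _ = lam • (Polynomial.aeval (NN ρ 1)) (Lp n) := by
          rw [show ((lam.den:ℚ))⁻¹ * lam.num = lam from by
            rw [mul_comm, ← div_eq_mul_inv]; exact Rat.num_div_den lam]
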